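/- With R, J_E, and the Bayes binomial ideal B_E as above, and β = ∏_{I∈E} (∑_{j∈I} p_{j|I}), the Bayes ideal is contained in the saturation of J_E by β: B_E ⊆ (J_E : β^∞). Concretely, for every Bayes binomial g = p_{i|K} p_{j|J} − p_{j|K} p_{i|J} with i,j ∈ J ⊆ K, one has (∑_{l∈J} p_{l|J}) · g ∈ J_E. -/

import Mathlib

open MvPolynomial

/-- Variables `p_{i|I}` for `i ∈ I ∈ E`: pairs `(I, i)` with `i ∈ I` and `I ∈ E`. -/
def CPVar (m : ℕ) (E : Finset (Finset (Fin m))) :=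
  {x : Finset (Fin m) × Fin m // x.2 ∈ x.1 ∧ x.1 ∈ E}

/-- The Bayes binomial ideal `B_E` is contained in the saturation `(J_E : β^∞)`, where
`β = ∏_{I∈E} ∑_{j∈I} p_{j|I}`; concretely, `(∑_{l∈J} p_{l|J}) · g ∈ J_E` for each Bayes
binomial `g = p_{i|K} p_{j|J} − p_{j|K} p_{i|J}`. -/
theorem stmt_7 (m : ℕ) (E : Finset (Finset (Fin m))) (hE : ∀ I ∈ E, 2 ≤ I.card)
    (JE BE : Ideal (MvPolynomial (CPVar m E) ℂ))
    (β : MvPolynomial (CPVar m E) ℂ)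
    (hβ : β = ∏ I ∈ E.attach,
      ∑ j ∈ (↑I : Finset (Fin m)).attach, X (⟨(↑I, ↑j), ⟨j.2, I.2⟩⟩ : CPVar m E))
    (hJE : JE = Ideal.span {f | ∃ (J K : Finset (Fin m)) (hJ : J ∈ E) (hK : K ∈ E)
      (hJK : J ⊆ K) (i : Fin m) (hi : i ∈ J),
      f = (∑ j ∈ J.attach, X (⟨(J, ↑j), ⟨j.2, hJ⟩⟩ : CPVar m E))
            * X ⟨(K, i), ⟨hJK hi, hK⟩⟩
          - X ⟨(J, i), ⟨hi, hJ⟩⟩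
            * ∑ j ∈ J.attach, X (⟨(K, ↑j), ⟨hJK j.2, hK⟩⟩ : CPVar m E)})
    (hBE : BE = Ideal.span {f | ∃ (J K : Finset (Fin m)) (hJ : J ∈ E) (hK : K ∈ E)
      (hJK : J ⊆ K) (i j : Fin m) (hi : i ∈ J) (hj : j ∈ J),
      f = X (⟨(K, i), ⟨hJK hi, hK⟩⟩ : CPVar m E) * X ⟨(J, j), ⟨hj, hJ⟩⟩
          - X ⟨(K, j), ⟨hJK hj, hK⟩⟩ * X ⟨(J, i), ⟨hi, hJ⟩⟩}) :
    (∀ g ∈ BE, ∃ n : ℕ, β ^ n * g ∈ JE) ∧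
    (∀ (J K : Finset (Fin m)) (hJ : J ∈ E) (hK : K ∈ E) (hJK : J ⊆ K)
      (i j : Fin m) (hi : i ∈ J) (hj : j ∈ J),
      (∑ l ∈ J.attach, X (⟨(J, ↑l), ⟨l.2, hJ⟩⟩ : CPVar m E)) *
        (X (⟨(K, i), ⟨hJK hi, hK⟩⟩ : CPVar m E) * X ⟨(J, j), ⟨hj, hJ⟩⟩
          - X ⟨(K, j), ⟨hJK hj, hK⟩⟩ * X ⟨(J, i), ⟨hi, hJ⟩⟩) ∈ JE) := by
  have key : ∀ (J K : Finset (Fin m)) (hJ : J ∈ E) (hK : K ∈ E) (hJK : J ⊆ K)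
      (i j : Fin m) (hi : i ∈ J) (hj : j ∈ J),
      (∑ l ∈ J.attach, X (⟨(J, ↑l), ⟨l.2, hJ⟩⟩ : CPVar m E)) *
        (X (⟨(K, i), ⟨hJK hi, hK⟩⟩ : CPVar m E) * X ⟨(J, j), ⟨hj, hJ⟩⟩
          - X ⟨(K, j), ⟨hJK hj, hK⟩⟩ * X ⟨(J, i), ⟨hi, hJ⟩⟩) ∈ JE := by
    intro J K hJ hK hJK i j hi hj
    set S : MvPolynomial (CPVar m E) ℂ :=
      ∑ l ∈ J.attach, X (⟨(J, ↑l), ⟨l.2, hJ⟩⟩ : CPVar m E) with hS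
    set T : MvPolynomial (CPVar m E) ℂ :=
      ∑ l ∈ J.attach, X (⟨(K, ↑l), ⟨hJK l.2, hK⟩⟩ : CPVar m E) with hT
    set xi : MvPolynomial (CPVar m E) ℂ := X (⟨(K, i), ⟨hJK hi, hK⟩⟩ : CPVar m E) with hxi
    set xj : MvPolynomial (CPVar m E) ℂ := X (⟨(K, j), ⟨hJK hj, hK⟩⟩ : CPVar m E) with hxj
    set yi : MvPolynomial (CPVar m E) ℂ := X (⟨(J, i), ⟨hi, hJ⟩⟩ : CPVar m E) with hyi
    set yj : MvPolynomial (CPVar m E) ℂ := X (⟨(J, j), ⟨hj, hJ⟩⟩ : CPVar m E) with hyj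
    have hfi : S * xi - yi * T ∈ JE := by
      rw [hJE]
      exact Ideal.subset_span ⟨J, K, hJ, hK, hJK, i, hi, rfl⟩
    have hfj : S * xj - yj * T ∈ JE := by
      rw [hJE]
      exact Ideal.subset_span ⟨J, K, hJ, hK, hJK, j, hj, rfl⟩
    have heq : S * (xi * yj - xj * yi)
        = yj * (S * xi - yi * T) - yi * (S * xj - yj * T) := by ring
    change S * (xi * yj - xj * yi) ∈ JE
    rw [heq]
    exact sub_mem (Ideal.mul_mem_left _ _ hfi) (Ideal.mul_mem_left _ _ hfj)
  refine ⟨?_, key⟩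
  intro g hg
  refine ⟨1, ?_⟩
  rw [pow_one]
  rw [hBE] at hg
  induction hg using Submodule.span_induction with
  | mem f hf =>
    obtain ⟨J, K, hJ, hK, hJK, i, j, hi, hj, rfl⟩ := hf
    have hmem : (⟨J, hJ⟩ : {x // x ∈ E}) ∈ E.attach := Finset.mem_attach _ _
    rw [hβ, ← Finset.mul_prod_erase _ _ hmem]
    have hmul : ∀ a b c : MvPolynomial (CPVar m E) ℂ, a * c ∈ JE → (a * b) * c ∈ JE :=
      fun a b c h => by rw [mul_right_comm]; exact Ideal.mul_mem_right _ _ h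
    exact hmul _ _ _ (key J K hJ hK hJK i j hi hj)
  | zero => simp
  | add a b _ _ ha hb => rw [mul_add]; exact add_mem ha hb
  | smul c a _ ha =>
    rw [smul_eq_mul, mul_left_comm]
    exact Ideal.mul_mem_left _ _ ha
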